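/- arXiv:1801.09243 — 6 statements merged into one kernel-verified Lean document; each statement's English description precedes it below -/
import Mathlib

section
/- Let D be an idempotent-complete triangulated category and let L, R be strictly full triangulated subcategories of D, each closed under direct summands, such that Hom(l, r) = 0 for every l ∈ L and r ∈ R. Let D' be the full subcategory of D consisting of those objects a admitting a distinguished triangle l → a → r → l[1] with l ∈ L and r ∈ R. Then D' is a strictly full triangulated subcategory of D closed under direct summands and containing both L and R, and the pair (L, R) is an m-structure on D', i.e. it is simultaneously a t-structure and a weight structure on D'. -/
/-!
STATEMENT 2: Let `D` be an idempotent-complete triangulated category and `L`, `R`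
strictly full triangulated subcategories of `D`, each closed under direct summands,
with `Hom(l, r) = 0` for every `l ∈ L`, `r ∈ R`.  Let `D'` be the full subcategory of
objects `a` admitting a distinguished triangle `l → a → r → l[1]` with `l ∈ L`,
`r ∈ R`.  Then `D'` is a strictly full triangulated subcategory of `D` closed under
direct summands containing both `L` and `R`, and `(L, R)` is an m-structure on `D'`.
-/

open CategoryTheory CategoryTheory.Limits CategoryTheory.Pretriangulated ZeroObject

universe v u

variable (D : Type u) [Category.{v} D] [HasZeroObject D] [HasShift D ℤ] [Preadditive D]
  [∀ n : ℤ, (CategoryTheory.shiftFunctor D n).Additive] [Pretriangulated D]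

/-- `P` is the class of objects of a strictly full triangulated subcategory of `D`
closed under direct summands: it contains the zero object and is closed under
isomorphisms, shifts in both directions, cones of morphisms (two-out-of-three in
distinguished triangles) and direct summands. -/
structure IsThickTriangulatedSub (P : Set D) : Prop where
  zero : (0 : D) ∈ P
  iso : ∀ ⦃x y : D⦄, (x ≅ y) → x ∈ P → y ∈ P
  shift : ∀ (x : D) (n : ℤ), x ∈ P → (x⟦n⟧ : D) ∈ P
  cone : ∀ T : Triangle D, (T ∈ distTriang D) → T.obj₁ ∈ P → T.obj₂ ∈ P → T.obj₃ ∈ P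
  summand : ∀ (x y : D) (i : x ⟶ y) (r : y ⟶ x), i ≫ r = 𝟙 x → y ∈ P → x ∈ P

/-- `(Dle, Dgt)` is an m-structure (simultaneously a t-structure and a weight
structure) on the full subcategory of `D` whose class of objects is `P`. -/
structure IsMStructureOn (P Dle Dgt : Set D) : Prop where
  le_subset : Dle ⊆ P
  gt_subset : Dgt ⊆ P
  le_iso : ∀ ⦃x y : D⦄, (x ≅ y) → x ∈ Dle → y ∈ Dle
  gt_iso : ∀ ⦃x y : D⦄, (x ≅ y) → x ∈ Dgt → y ∈ Dgt
  /-- Orthogonality: `Hom(a, b) = 0` for `a ∈ Dle`, `b ∈ Dgt`. -/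
  orth : ∀ a ∈ Dle, ∀ b ∈ Dgt, ∀ f : a ⟶ b, f = 0
  /-- t-structure invariance: `Dle[1] ⊆ Dle`. -/
  le_shift : ∀ x ∈ Dle, (x⟦(1 : ℤ)⟧ : D) ∈ Dle
  /-- t-structure invariance: `Dgt[-1] ⊆ Dgt`. -/
  gt_negShift : ∀ x ∈ Dgt, (x⟦(-1 : ℤ)⟧ : D) ∈ Dgt
  /-- weight structure co-invariance: `Dle[-1] ⊆ Dle`. -/
  le_negShift : ∀ x ∈ Dle, (x⟦(-1 : ℤ)⟧ : D) ∈ Dle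
  /-- weight structure co-invariance: `Dgt[1] ⊆ Dgt`. -/
  gt_shift : ∀ x ∈ Dgt, (x⟦(1 : ℤ)⟧ : D) ∈ Dgt
  /-- `Dle` is Karoubi-closed (closed under direct summands). -/
  le_summand : ∀ (x y : D) (i : x ⟶ y) (r : y ⟶ x), i ≫ r = 𝟙 x → y ∈ Dle → x ∈ Dle
  /-- `Dgt` is Karoubi-closed (closed under direct summands). -/
  gt_summand : ∀ (x y : D) (i : x ⟶ y) (r : y ⟶ x), i ≫ r = 𝟙 x → y ∈ Dgt → x ∈ Dgt
  /-- Decomposition: every object of `P` fits in a distinguished triangle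
  `a≤ → a → a> → a≤[1]` with `a≤ ∈ Dle` and `a> ∈ Dgt`. -/
  decomp : ∀ a ∈ P, ∃ (x y : D) (f : x ⟶ a) (g : a ⟶ y) (d : y ⟶ (x⟦(1 : ℤ)⟧ : D)),
      (Triangle.mk f g d ∈ distTriang D) ∧ x ∈ Dle ∧ y ∈ Dgt


section Aux

variable {D}

namespace Stmt2Aux

/-- The glued class `L * R`. -/
def glueSet (L R : Set D) : Set D :=
  {a : D | ∃ (l r : D) (f : l ⟶ a) (g : a ⟶ r) (d : r ⟶ (l⟦(1 : ℤ)⟧ : D)),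
    (Triangle.mk f g d ∈ distTriang D) ∧ l ∈ L ∧ r ∈ R}

variable {L R : Set D}

lemma mem_glueSet_of_dist (T : Triangle D) (hT : T ∈ distTriang D)
    (h1 : T.obj₁ ∈ L) (h3 : T.obj₃ ∈ R) : T.obj₂ ∈ glueSet L R :=
  ⟨T.obj₁, T.obj₃, T.mor₁, T.mor₂, T.mor₃, hT, h1, h3⟩

lemma glueSet_iso {x y : D} (e : x ≅ y) (hx : x ∈ glueSet L R) : y ∈ glueSet L R := by
  obtain ⟨l, r, f, g, d, hT, hl, hr⟩ := hx
  refine ⟨l, r, f ≫ e.hom, e.inv ≫ g, d, isomorphic_distinguished _ hT _ ?_, hl, hr⟩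
  exact Triangle.isoMk _ _ (Iso.refl _) e.symm (Iso.refl _) (by dsimp only [Triangle.mk]; simp) (by dsimp only [Triangle.mk]; simp)
    (by dsimp only [Triangle.mk]; simp)

lemma subset_glueSet_left (hR : IsThickTriangulatedSub D R) : L ⊆ glueSet L R := fun l hl =>
  ⟨l, 0, 𝟙 l, 0, 0, contractible_distinguished l, hl, hR.zero⟩

lemma subset_glueSet_right (hL : IsThickTriangulatedSub D L) : R ⊆ glueSet L R := fun r hr =>
  ⟨0, r, 0, 𝟙 r, 0, contractible_distinguished₁ r, hL.zero, hr⟩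

lemma glueSet_shift (hL : IsThickTriangulatedSub D L) (hR : IsThickTriangulatedSub D R)
    (x : D) (n : ℤ) (hx : x ∈ glueSet L R) : (x⟦n⟧ : D) ∈ glueSet L R := by
  obtain ⟨l, r, f, g, d, hT, hl, hr⟩ := hx
  exact ⟨_, _, _, _, _, Pretriangulated.Triangle.shift_distinguished _ hT n,
    hL.shift l n hl, hR.shift r n hr⟩

/-- two-out-of-three for thick subcategories, in the middle position. -/
lemma thick_ext₂ {P : Set D} (hP : IsThickTriangulatedSub D P) (T : Triangle D)
    (hT : T ∈ distTriang D) (h1 : T.obj₁ ∈ P) (h3 : T.obj₃ ∈ P) : T.obj₂ ∈ P :=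
  hP.cone T.invRotate (inv_rot_of_distTriang T hT) (hP.shift _ (-1) h3) h1

/-- Splitting a distinguished triangle with zero connecting map, in the swapped order. -/
lemma splitSwap (T : Triangle D) (hT : T ∈ distTriang D) (h0 : T.mor₃ = 0) :
    ∃ (σ : T.obj₃ ⟶ T.obj₂) (ρ : T.obj₂ ⟶ T.obj₁),
      Triangle.mk σ ρ (0 : T.obj₁ ⟶ T.obj₃⟦(1 : ℤ)⟧) ∈ distTriang D := by
  obtain ⟨e, he₁, he₂⟩ := exists_iso_binaryBiproduct_of_distTriang T hT h0
  refine ⟨biprod.inr ≫ e.inv, e.hom ≫ biprod.fst, ?_⟩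
  refine isomorphic_distinguished _ (binaryBiproductTriangle_distinguished T.obj₃ T.obj₁) _ ?_
  refine Triangle.isoMk _ _ (Iso.refl _) (e ≪≫ biprod.braiding _ _) (Iso.refl _) ?_ ?_ ?_
  · dsimp only [Triangle.mk, binaryBiproductTriangle]; dsimp
    apply biprod.hom_ext <;> simp
  · dsimp only [Triangle.mk, binaryBiproductTriangle]; dsimp
    simp [he₂]
  · dsimp only [Triangle.mk, binaryBiproductTriangle]; dsimp
    simp

lemma glueSet_ext₂ [IsTriangulated D] (hL : IsThickTriangulatedSub D L)
    (hR : IsThickTriangulatedSub D R)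
    (horth : ∀ l ∈ L, ∀ r ∈ R, ∀ f : l ⟶ r, f = 0)
    (T : Triangle D) (hT : T ∈ distTriang D)
    (h1 : T.obj₁ ∈ glueSet L R) (h3 : T.obj₃ ∈ glueSet L R) : T.obj₂ ∈ glueSet L R := by
  obtain ⟨l₁, r₁, f₁, g₁, d₁, hT₁, hl₁, hr₁⟩ := h1
  obtain ⟨l₂, r₂, f₂, g₂, d₂, hT₂, hl₂, hr₂⟩ := h3
  -- Octahedron 1 : z := cone of l₁ ⟶ T.obj₂
  obtain ⟨z, gz, dz, hTz⟩ := distinguished_cocone_triangle (f₁ ≫ T.mor₁)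
  have O1 := Triangulated.someOctahedron rfl hT₁ hT hTz
  -- Octahedron 2 : n := cone of z ⟶ r₂
  obtain ⟨n, gn, dn, hTn⟩ := distinguished_cocone_triangle (O1.m₃ ≫ g₂)
  have O2 := Triangulated.someOctahedron rfl (rot_of_distTriang _ O1.mem)
    (rot_of_distTriang _ hT₂) hTn
  -- its connecting map vanishes, so it splits in the swapped order
  obtain ⟨σ, ρ, hsplit⟩ := splitSwap _ O2.mem
    (horth _ (hL.shift l₂ 1 hl₂) _ (hR.shift _ 1 (hR.shift r₁ 1 hr₁)) _)
  -- shift the split triangle by -1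
  have hTc : (Pretriangulated.Triangle.shiftFunctor D (-1)).obj (Triangle.mk σ ρ 0)
      ∈ distTriang D :=
    Pretriangulated.Triangle.shift_distinguished _ hsplit (-1)
  -- Octahedron 3 : r'' := cone of l₂⟦1⟧⟦-1⟧ ⟶ z
  obtain ⟨r'', g₃, d₃, hT₃⟩ := distinguished_cocone_triangle
    (((Pretriangulated.Triangle.shiftFunctor D (-1)).obj (Triangle.mk σ ρ 0)).mor₁ ≫
      (Triangle.mk (O1.m₃ ≫ g₂) gn dn).invRotate.mor₁)
  have O3 := Triangulated.someOctahedron rfl hTc (inv_rot_of_distTriang _ hTn) hT₃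
  have hr'' : r'' ∈ R := hR.cone _ (inv_rot_of_distTriang _ O3.mem)
    (hR.shift _ (-1) hr₂) (hR.shift _ (-1) (hR.shift r₁ 1 hr₁))
  -- Octahedron 4 : n' := cone of T.obj₂ ⟶ r''
  obtain ⟨n', g₄, d₄, hT₄⟩ := distinguished_cocone_triangle (gz ≫ g₃)
  have O4 := Triangulated.someOctahedron rfl (rot_of_distTriang _ hTz)
    (rot_of_distTriang _ hT₃) hT₄
  have hn' : n' ∈ L := hL.cone _ (inv_rot_of_distTriang _ O4.mem)
    (hL.shift _ (-1) (hL.shift _ 1 (hL.shift _ (-1) (hL.shift l₂ 1 hl₂))))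
    (hL.shift l₁ 1 hl₁)
  exact mem_glueSet_of_dist (Triangle.mk (gz ≫ g₃) g₄ d₄).invRotate
    (inv_rot_of_distTriang _ hT₄) (hL.shift n' (-1) hn') hr''

lemma glueSet_summand [IsTriangulated D] [IsIdempotentComplete D]
    (hL : IsThickTriangulatedSub D L) (hR : IsThickTriangulatedSub D R)
    (horth : ∀ l ∈ L, ∀ r ∈ R, ∀ f : l ⟶ r, f = 0)
    (x y : D) (i : x ⟶ y) (q : y ⟶ x) (hiq : i ≫ q = 𝟙 x)
    (hy : y ∈ glueSet L R) : x ∈ glueSet L R := by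
  obtain ⟨l, r, f, g, d, hT, hl, hr⟩ := hy
  set e : y ⟶ y := q ≫ i with hedef
  have he : e ≫ e = e := by
    rw [hedef, Category.assoc, ← Category.assoc i q i, hiq, Category.id_comp]
  have hie : i ≫ e = i := by rw [hedef, ← Category.assoc, hiq, Category.id_comp]
  have heq : e ≫ q = q := by rw [hedef, Category.assoc, hiq, Category.comp_id]
  -- uniqueness helpers
  have uniqL : ∀ δ : l ⟶ l, δ ≫ f = 0 → δ = 0 := by
    intro δ hδ
    obtain ⟨w, hw⟩ := Triangle.coyoneda_exact₂ _ (inv_rot_of_distTriang _ hT) δ hδ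
    rw [hw, horth _ hl _ (hR.shift r (-1) hr) w]
    exact zero_comp
  have uniqR : ∀ δ : r ⟶ r, g ≫ δ = 0 → δ = 0 := by
    intro δ hδ
    obtain ⟨w, hw⟩ := Triangle.yoneda_exact₃ _ hT δ hδ
    rw [hw, horth _ (hL.shift l 1 hl) _ hr w]
    exact comp_zero
  -- lift the idempotent e to the triangle
  obtain ⟨eL, heL⟩ := Triangle.coyoneda_exact₂ _ hT (f ≫ e) (horth _ hl _ hr _)
  obtain ⟨eR, heR₁, heR₂⟩ := complete_distinguished_triangle_morphism _ _ hT hT eL e heL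
  simp only [Triangle.mk_mor₁, Triangle.mk_mor₂, Triangle.mk_mor₃] at heL heR₁ heR₂
  change l ⟶ l at eL
  change r ⟶ r at eR
  dsimp only [Triangle.mk] at heL heR₁ heR₂
  -- heR₁ : g ≫ eR = e ≫ g,  heR₂ : d ≫ eL⟦1⟧' = eR ≫ d
  have heL2 : eL ≫ eL = eL := by
    refine sub_eq_zero.1 (uniqL _ ?_)
    rw [Preadditive.sub_comp, Category.assoc, ← heL, ← Category.assoc, ← heL,
      Category.assoc, he, heL, sub_self]
  have heR2 : eR ≫ eR = eR := by
    refine sub_eq_zero.1 (uniqR _ ?_)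
    have h1 : g ≫ eR ≫ eR = g ≫ eR := by
      rw [← Category.assoc, heR₁, Category.assoc, heR₁, ← Category.assoc, he]
    rw [Preadditive.comp_sub, h1]
    exact sub_self _
  -- split the idempotents
  obtain ⟨a, ia, pa, hia, hpa⟩ := IsIdempotentComplete.idempotents_split l eL heL2
  obtain ⟨b, ib, pb, hib, hpb⟩ := IsIdempotentComplete.idempotents_split r eR heR2
  have hiaeL : ia ≫ eL = ia := by rw [← hpa, ← Category.assoc, hia, Category.id_comp]
  have heLpa : eL ≫ pa = pa := by rw [← hpa, Category.assoc, hia, Category.comp_id]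
  have hibeR : ib ≫ eR = ib := by rw [← hpb, ← Category.assoc, hib, Category.id_comp]
  have heRpb : eR ≫ pb = pb := by rw [← hpb, Category.assoc, hib, Category.comp_id]
  -- the candidate triangle for x
  obtain ⟨c, gc, dc, hTc⟩ := distinguished_cocone_triangle (ia ≫ f ≫ q)
  obtain ⟨h, hh₁, hh₂⟩ := complete_distinguished_triangle_morphism
    (Triangle.mk (ia ≫ f ≫ q) gc dc) (Triangle.mk f g d) hTc hT ia i (by
      show (ia ≫ f ≫ q) ≫ i = ia ≫ f
      simp only [Category.assoc]
      rw [← hedef, heL, ← Category.assoc, hiaeL])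
  obtain ⟨k, hk₁, hk₂⟩ := complete_distinguished_triangle_morphism
    (Triangle.mk f g d) (Triangle.mk (ia ≫ f ≫ q) gc dc) hT hTc pa q (by
      show f ≫ q = pa ≫ ia ≫ f ≫ q
      rw [← Category.assoc, hpa, ← Category.assoc, ← heL, Category.assoc, heq])
  simp only [Triangle.mk_mor₁, Triangle.mk_mor₂, Triangle.mk_mor₃] at hh₁ hh₂ hk₁ hk₂
  change c ⟶ r at h
  change r ⟶ c at k
  dsimp only [Triangle.mk] at hh₁ hh₂ hk₁ hk₂
  -- hh₁ : gc ≫ h = i ≫ g,  hh₂ : dc ≫ ia⟦1⟧' = h ≫ d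
  -- hk₁ : g ≫ k = q ≫ gc,  hk₂ : d ≫ pa⟦1⟧' = k ≫ dc
  have hkh : k ≫ h = eR := by
    refine sub_eq_zero.1 (uniqR _ ?_)
    have e1 : g ≫ k ≫ h = e ≫ g := by
      rw [← Category.assoc, hk₁, Category.assoc, hh₁, ← Category.assoc, ← hedef]
    rw [Preadditive.comp_sub, e1, heR₁, sub_self]
  have hψφ : (ib ≫ k) ≫ (h ≫ pb) = 𝟙 b := by
    rw [Category.assoc, ← Category.assoc k h pb, hkh, heRpb, hib]
  set θ : c ⟶ c := h ≫ eR ≫ k with hθdef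
  have hθeq : (h ≫ pb) ≫ (ib ≫ k) = θ := by
    rw [hθdef, Category.assoc, ← Category.assoc pb ib k, hpb]
  have hgcθ : gc ≫ θ = gc := by
    rw [hθdef, ← Category.assoc, hh₁, Category.assoc, ← Category.assoc g eR k, heR₁,
      Category.assoc, ← Category.assoc i e, hie, ← Category.assoc, Category.assoc,
      hk₁, ← Category.assoc, hiq, Category.id_comp]
  have hθd : θ ≫ dc = dc := by
    rw [hθdef, Category.assoc, Category.assoc, ← hk₂, ← Category.assoc eR d, ← heR₂,
      Category.assoc, ← Functor.map_comp, heLpa, ← Category.assoc, ← hh₂,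
      Category.assoc, ← Functor.map_comp, hia]
    simp
  have hθdinvert : θ ≫ (𝟙 c - (θ - 𝟙 c)) = 𝟙 c := by
    obtain ⟨τ, hτ⟩ := Triangle.coyoneda_exact₃ _ hTc (θ - 𝟙 c) (by
      show (θ - 𝟙 c) ≫ dc = 0
      rw [Preadditive.sub_comp, hθd, Category.id_comp, sub_self])
    simp only [Triangle.mk_mor₂] at hτ
    change c ⟶ x at τ
    dsimp only [Triangle.mk] at hτ
    have hgcε : gc ≫ (θ - 𝟙 c) = 0 := by
      rw [Preadditive.comp_sub, hgcθ, Category.comp_id, sub_self]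
    have hε2 : (θ - 𝟙 c) ≫ (θ - 𝟙 c) = 0 := by
      nth_rewrite 1 [hτ]
      rw [Category.assoc, hgcε, comp_zero]
    have hθε : θ ≫ (θ - 𝟙 c) = θ - 𝟙 c := by
      have hsum : θ = 𝟙 c + (θ - 𝟙 c) := by abel
      calc θ ≫ (θ - 𝟙 c) = (𝟙 c + (θ - 𝟙 c)) ≫ (θ - 𝟙 c) := by rw [← hsum]
        _ = θ - 𝟙 c := by rw [Preadditive.add_comp, hε2, Category.id_comp, add_zero]
    rw [Preadditive.comp_sub, Category.comp_id, hθε]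
    abel
  have hφψ : (h ≫ pb) ≫ (ib ≫ k) = 𝟙 c := by
    have hχ : (h ≫ pb) ≫ ((ib ≫ k) ≫ (𝟙 c - (θ - 𝟙 c))) = 𝟙 c := by
      rw [← Category.assoc (h ≫ pb) (ib ≫ k) (𝟙 c - (θ - 𝟙 c)), hθeq, hθdinvert]
    have hψχ : (ib ≫ k) ≫ (𝟙 c - (θ - 𝟙 c)) = ib ≫ k := by
      conv_lhs => rw [← Category.id_comp ((ib ≫ k) ≫ (𝟙 c - (θ - 𝟙 c))), ← hψφ,
        Category.assoc (ib ≫ k) (h ≫ pb) ((ib ≫ k) ≫ (𝟙 c - (θ - 𝟙 c)))]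
      rw [hχ]
      exact Category.comp_id _
    rw [← hψχ, hχ]
  refine ⟨a, b, ia ≫ f ≫ q, i ≫ g ≫ pb, ib ≫ d ≫ (shiftFunctor D (1 : ℤ)).map pa, ?_,
    hL.summand a l ia pa hia hl, hR.summand b r ib pb hib hr⟩
  refine isomorphic_distinguished _ hTc _ ?_
  refine Triangle.isoMk _ _ (Iso.refl a) (Iso.refl x) (Iso.mk (ib ≫ k) (h ≫ pb) hψφ hφψ)
    ?_ ?_ ?_
  · dsimp only [Triangle.mk]; dsimp
    rw [Category.comp_id, Category.id_comp]
  · dsimp only [Triangle.mk]; dsimp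
    rw [Category.id_comp]
    simp only [Category.assoc]
    rw [← Category.assoc pb ib, hpb, ← Category.assoc g eR, heR₁, Category.assoc e g,
      ← Category.assoc i e, hie, hk₁, ← Category.assoc, hiq, Category.id_comp]
  · dsimp only [Triangle.mk]; dsimp
    simp only [CategoryTheory.Functor.map_id, Category.comp_id, Category.assoc]
    rw [← hk₂]

end Stmt2Aux

end Aux

theorem stmt2 [IsTriangulated D] [IsIdempotentComplete D] (L R : Set D)
    (hL : IsThickTriangulatedSub D L) (hR : IsThickTriangulatedSub D R)
    (horth : ∀ l ∈ L, ∀ r ∈ R, ∀ f : l ⟶ r, f = 0) :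
    IsThickTriangulatedSub D
        {a : D | ∃ (l r : D) (f : l ⟶ a) (g : a ⟶ r) (d : r ⟶ (l⟦(1 : ℤ)⟧ : D)),
          (Triangle.mk f g d ∈ distTriang D) ∧ l ∈ L ∧ r ∈ R} ∧
      L ⊆ {a : D | ∃ (l r : D) (f : l ⟶ a) (g : a ⟶ r) (d : r ⟶ (l⟦(1 : ℤ)⟧ : D)),
          (Triangle.mk f g d ∈ distTriang D) ∧ l ∈ L ∧ r ∈ R} ∧
      R ⊆ {a : D | ∃ (l r : D) (f : l ⟶ a) (g : a ⟶ r) (d : r ⟶ (l⟦(1 : ℤ)⟧ : D)),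
          (Triangle.mk f g d ∈ distTriang D) ∧ l ∈ L ∧ r ∈ R} ∧
      IsMStructureOn D
        {a : D | ∃ (l r : D) (f : l ⟶ a) (g : a ⟶ r) (d : r ⟶ (l⟦(1 : ℤ)⟧ : D)),
          (Triangle.mk f g d ∈ distTriang D) ∧ l ∈ L ∧ r ∈ R} L R := by
  have hthick : IsThickTriangulatedSub D (Stmt2Aux.glueSet L R) := by
    constructor
    · exact Stmt2Aux.subset_glueSet_left hR hL.zero
    · exact fun x y e hx => Stmt2Aux.glueSet_iso e hx
    · exact Stmt2Aux.glueSet_shift hL hR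
    · intro T hT h1 h2
      exact Stmt2Aux.glueSet_ext₂ hL hR horth T.rotate (rot_of_distTriang T hT) h2
        (Stmt2Aux.glueSet_shift hL hR _ 1 h1)
    · exact fun x y i r hir hy => Stmt2Aux.glueSet_summand hL hR horth x y i r hir hy
  refine ⟨hthick, Stmt2Aux.subset_glueSet_left hR, Stmt2Aux.subset_glueSet_right hL, ?_⟩
  exact {
    le_subset := Stmt2Aux.subset_glueSet_left hR
    gt_subset := Stmt2Aux.subset_glueSet_right hL
    le_iso := hL.iso
    gt_iso := hR.iso
    orth := horth
    le_shift := fun x hx => hL.shift x 1 hx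
    gt_negShift := fun x hx => hR.shift x (-1) hx
    le_negShift := fun x hx => hL.shift x (-1) hx
    gt_shift := fun x hx => hR.shift x 1 hx
    le_summand := hL.summand
    gt_summand := hR.summand
    decomp := fun a ha => ha }
end

section
/- Let D be a triangulated category and let L, R be strictly full triangulated subcategories of D such that Hom(l, r) = 0 for every l ∈ L and r ∈ R. Suppose f : a' → a is a morphism in D, and there are distinguished triangles b' → a' → c' → b'[1] and b → a → c → b[1] with b, b' ∈ L and c, c' ∈ R. Then the cone of f admits a distinguished triangle l'' → Cone(f) → r'' → l''[1] with l'' ∈ L and r'' ∈ R; more precisely, f extends to a morphism of triangles (f_b, f, f_c) with f_b : b' → b and f_c : c' → c, and one may take l'' = Cone(f_b) and r'' = Cone(f_c). -/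
/-!
STATEMENT 3: Let `D` be a triangulated category, `L`, `R` strictly full triangulated
subcategories with `Hom(l, r) = 0` for all `l ∈ L`, `r ∈ R`.  Given a morphism
`f : a' → a` and distinguished triangles `b' → a' → c' → b'[1]`, `b → a → c → b[1]`
with `b, b' ∈ L` and `c, c' ∈ R`, the cone of `f` admits a distinguished triangle
`l'' → Cone(f) → r'' → l''[1]` with `l'' ∈ L`, `r'' ∈ R`; more precisely `f` extends
to a morphism of triangles `(f_b, f, f_c)` and one may take `l'' = Cone(f_b)` and
`r'' = Cone(f_c)`.
-/

open CategoryTheory CategoryTheory.Limits CategoryTheory.Pretriangulated ZeroObject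

universe v u

variable (D : Type u) [Category.{v} D] [HasZeroObject D] [HasShift D ℤ] [Preadditive D]
  [∀ n : ℤ, (CategoryTheory.shiftFunctor D n).Additive] [Pretriangulated D]

/-- `P` is the class of objects of a strictly full triangulated subcategory of `D`:
it contains the zero object and is closed under isomorphisms, shifts in both
directions, and cones of morphisms (two-out-of-three in distinguished triangles). -/
structure IsTriangulatedSub (P : Set D) : Prop where
  zero : (0 : D) ∈ P
  iso : ∀ ⦃x y : D⦄, (x ≅ y) → x ∈ P → y ∈ P
  shift : ∀ (x : D) (n : ℤ), x ∈ P → (x⟦n⟧ : D) ∈ P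
  cone : ∀ T : Triangle D, (T ∈ distTriang D) → T.obj₁ ∈ P → T.obj₂ ∈ P → T.obj₃ ∈ P

theorem stmt3 [IsTriangulated D] (L R : Set D)
    (hL : IsTriangulatedSub D L) (hR : IsTriangulatedSub D R)
    (horth : ∀ l ∈ L, ∀ r ∈ R, ∀ f : l ⟶ r, f = 0)
    -- the two given distinguished triangles `b' → a' → c' → b'[1]` and `b → a → c → b[1]`
    (T' T : Triangle D) (hT' : T' ∈ distTriang D) (hT : T ∈ distTriang D)
    (hb' : T'.obj₁ ∈ L) (hb : T.obj₁ ∈ L) (hc' : T'.obj₃ ∈ R) (hc : T.obj₃ ∈ R)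
    -- the morphism `f : a' → a`
    (f : T'.obj₂ ⟶ T.obj₂)
    -- a choice of the cone of `f`, i.e. a distinguished triangle `a' → a → Cone(f) → a'[1]`
    (Cf : D) (u : T.obj₂ ⟶ Cf) (v : Cf ⟶ (T'.obj₂⟦(1 : ℤ)⟧ : D))
    (hCf : Triangle.mk f u v ∈ distTriang D) :
    -- `f` extends to a morphism of triangles `(f_b, f, f_c)` …
    ∃ φ : T' ⟶ T, φ.hom₂ = f ∧
      -- … with a cone `Cb = Cone(f_b)`, which lies in `L` …
      ∃ (Cb : D) (ub : T.obj₁ ⟶ Cb) (vb : Cb ⟶ (T'.obj₁⟦(1 : ℤ)⟧ : D)),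
        (Triangle.mk φ.hom₁ ub vb ∈ distTriang D) ∧ Cb ∈ L ∧
      -- … and a cone `Cc = Cone(f_c)`, which lies in `R` …
      ∃ (Cc : D) (uc : T.obj₃ ⟶ Cc) (vc : Cc ⟶ (T'.obj₃⟦(1 : ℤ)⟧ : D)),
        (Triangle.mk φ.hom₃ uc vc ∈ distTriang D) ∧ Cc ∈ R ∧
      -- … such that there is a distinguished triangle `Cone(f_b) → Cone(f) → Cone(f_c) → ⋯`.
      ∃ (α : Cb ⟶ Cf) (β : Cf ⟶ Cc) (γ : Cc ⟶ (Cb⟦(1 : ℤ)⟧ : D)),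
        Triangle.mk α β γ ∈ distTriang D := by
  -- Step 1: construct `f₁ : b' → b` with `f₁ ≫ T.mor₁ = T'.mor₁ ≫ f`.
  obtain ⟨f₁, hf₁⟩ := Triangle.coyoneda_exact₂ T hT (T'.mor₁ ≫ f)
    (horth _ hb' _ hc _)
  have hf₁' : f₁ ≫ T.mor₁ = T'.mor₁ ≫ f := hf₁.symm
  -- Octahedron A on the composition `b' → a' → a`.
  obtain ⟨X, vX, wX, hX⟩ := Pretriangulated.distinguished_cocone_triangle (T'.mor₁ ≫ f)
  have hT'' : Triangle.mk T'.mor₁ T'.mor₂ T'.mor₃ ∈ distTriang D := hT'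
  have hT₂ : Triangle.mk T.mor₁ T.mor₂ T.mor₃ ∈ distTriang D := hT
  let OA := Triangulated.someOctahedron rfl hT'' hCf hX
  -- Octahedron B on the composition `b' → b → a` (equal to the previous composite).
  obtain ⟨Cb, ub, vb, hCb⟩ := Pretriangulated.distinguished_cocone_triangle f₁
  let OB := Triangulated.someOctahedron hf₁' hCb hT₂ hX
  -- `Cb ∈ L`.
  have hCbL : Cb ∈ L := hL.cone _ hCb hb' hb
  -- A cone on `f₃ := OA.m₁ ≫ OB.m₃ : c' → c`.
  obtain ⟨Cc, uc, vc, hCc⟩ :=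
    Pretriangulated.distinguished_cocone_triangle (OA.m₁ ≫ OB.m₃)
  -- Octahedron D on the composition `c' → X → c`.
  have hrotB : Triangle.mk OB.m₃ (T.mor₃ ≫ ub⟦(1 : ℤ)⟧') (-OB.m₁⟦(1 : ℤ)⟧') ∈ distTriang D :=
    Pretriangulated.rot_of_distTriang _ OB.mem
  let OD := Triangulated.someOctahedron rfl OA.mem hrotB hCc
  -- `Cc ∈ R`.
  have hCcR : Cc ∈ R := hR.cone _ hCc hc' hc
  -- the morphism of triangles
  refine ⟨{ hom₁ := f₁, hom₂ := f, hom₃ := OA.m₁ ≫ OB.m₃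
            comm₁ := hf₁'.symm
            comm₂ := ?_
            comm₃ := ?_ }, rfl,
    Cb, ub, vb, hCb, hCbL, Cc, uc, vc, hCc, hCcR,
    OB.m₁ ≫ OA.m₃, OD.m₁, OD.m₃, ?_⟩
  · -- T'.mor₂ ≫ (OA.m₁ ≫ OB.m₃) = f ≫ T.mor₂
    have h1 : T'.mor₂ ≫ OA.m₁ = f ≫ vX := OA.comm₁
    have h2 : vX ≫ OB.m₃ = T.mor₂ := OB.comm₃
    rw [← Category.assoc, h1, Category.assoc, h2]
  · -- (OA.m₁ ≫ OB.m₃) ≫ T.mor₃ = T'.mor₃ ≫ f₁⟦1⟧'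
    have h3 : wX ≫ f₁⟦(1 : ℤ)⟧' = OB.m₃ ≫ T.mor₃ := OB.comm₄
    have h4 : OA.m₁ ≫ wX = T'.mor₃ := OA.comm₂
    rw [Category.assoc, ← h3, ← Category.assoc, h4]
  · -- the triangle `Cb → Cf → Cc → Cb⟦1⟧`
    rw [Pretriangulated.rotate_distinguished_triangle]
    refine Pretriangulated.isomorphic_distinguished _ OD.mem _ ?_
    refine Triangle.isoMk _ _ (Iso.refl _) (Iso.refl _) (Iso.refl _) ?_ ?_ ?_
    · exact (Category.comp_id _).trans (Category.id_comp _).symm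
    · exact (Category.comp_id _).trans (Category.id_comp _).symm
    · show (-(shiftFunctor D 1).map (OB.m₁ ≫ OA.m₃)) ≫ (shiftFunctor D 1).map (𝟙 Cf) =
        𝟙 _ ≫ ((-(shiftFunctor D 1).map OB.m₁) ≫ (shiftFunctor D 1).map OA.m₃)
      simp
end

section
/- Let D be an idempotent-complete triangulated category and let L, R be strictly full subcategories of D, each closed under direct summands, such that Hom(l, r[n]) = 0 for every l ∈ L, r ∈ R and every integer n. Suppose a is an object of D admitting a distinguished triangle b → a → c → b[1] with b ∈ L and c ∈ R, and suppose a' is a direct summand of a (i.e. there are morphisms i : a' → a and q : a → a' with q ∘ i = id). Then a' also admits a distinguished triangle b' → a' → c' → b'[1] with b' ∈ L and c' ∈ R. -/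
/-!
STATEMENT 4: Let `D` be an idempotent-complete triangulated category and `L`, `R`
strictly full subcategories, each closed under direct summands, with
`Hom(l, r[n]) = 0` for every `l ∈ L`, `r ∈ R`, `n ∈ ℤ`.  If `a` admits a
distinguished triangle `b → a → c → b[1]` with `b ∈ L`, `c ∈ R`, and `a'` is a
direct summand of `a`, then `a'` admits a distinguished triangle `b' → a' → c' → b'[1]`
with `b' ∈ L`, `c' ∈ R`.
-/

open CategoryTheory CategoryTheory.Limits CategoryTheory.Pretriangulated ZeroObject

universe v u

variable {D : Type u} [Category.{v} D] [HasZeroObject D] [HasShift D ℤ] [Preadditive D]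
  [∀ n : ℤ, (CategoryTheory.shiftFunctor D n).Additive] [Pretriangulated D]

theorem stmt4 [IsTriangulated D] [IsIdempotentComplete D] (L R : Set D)
    -- `L` and `R` are strictly full (closed under isomorphisms) …
    (hLiso : ∀ ⦃x y : D⦄, (x ≅ y) → x ∈ L → y ∈ L)
    (hRiso : ∀ ⦃x y : D⦄, (x ≅ y) → x ∈ R → y ∈ R)
    -- … and closed under direct summands
    (hLsum : ∀ (x y : D) (i : x ⟶ y) (r : y ⟶ x), i ≫ r = 𝟙 x → y ∈ L → x ∈ L)
    (hRsum : ∀ (x y : D) (i : x ⟶ y) (r : y ⟶ x), i ≫ r = 𝟙 x → y ∈ R → x ∈ R)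
    -- orthogonality in all degrees
    (horth : ∀ l ∈ L, ∀ r ∈ R, ∀ (n : ℤ) (f : l ⟶ (r⟦n⟧ : D)), f = 0)
    -- a distinguished triangle `b → a → c → b[1]` with `b ∈ L`, `c ∈ R`
    (a b c : D) (g : b ⟶ a) (h : a ⟶ c) (d : c ⟶ (b⟦(1 : ℤ)⟧ : D))
    (hT : Triangle.mk g h d ∈ distTriang D) (hb : b ∈ L) (hc : c ∈ R)
    -- a direct summand `a'` of `a`
    (a' : D) (i : a' ⟶ a) (q : a ⟶ a') (hiq : i ≫ q = 𝟙 a') :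
    ∃ (b' c' : D) (g' : b' ⟶ a') (h' : a' ⟶ c') (d' : c' ⟶ (b'⟦(1 : ℤ)⟧ : D)),
      (Triangle.mk g' h' d' ∈ distTriang D) ∧ b' ∈ L ∧ c' ∈ R := by
  -- the idempotent `e = q ≫ i` on `a`
  have hee : (q ≫ i) ≫ (q ≫ i) = q ≫ i := by
    rw [Category.assoc, ← Category.assoc i q i, hiq, Category.id_comp]
  -- Hom(b, c) = 0
  have hbc0 : ∀ (f : b ⟶ c), f = 0 := by
    intro f
    have h0 := horth b hb c hc 0 (f ≫ ((shiftFunctorZero D ℤ).inv.app c))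
    rw [← cancel_mono ((shiftFunctorZero D ℤ).inv.app c), h0, zero_comp]
  -- uniqueness of lifts along g : any δ : b ⟶ b with δ ≫ g = 0 is zero
  have huniq : ∀ (δ : b ⟶ b), δ ≫ g = 0 → δ = 0 := by
    intro δ hδ
    obtain ⟨φ, hφ⟩ := Triangle.coyoneda_exact₂ _ (inv_rot_of_distTriang _ hT) δ hδ
    have : φ = 0 := horth b hb c hc (-1) φ
    rw [hφ, this]; exact zero_comp
  -- existence of the lift β of e
  have hgeh : (g ≫ (q ≫ i)) ≫ h = 0 := hbc0 _
  obtain ⟨β, hβ⟩ : ∃ β : b ⟶ b, g ≫ (q ≫ i) = β ≫ g :=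
    Triangle.coyoneda_exact₂ _ hT (g ≫ (q ≫ i)) hgeh
  -- β is idempotent
  have hββ : β ≫ β = β := by
    have h1 : (β ≫ β) ≫ g = β ≫ g :=
      calc (β ≫ β) ≫ g = β ≫ (β ≫ g) := Category.assoc _ _ _
        _ = β ≫ (g ≫ (q ≫ i)) := by rw [← hβ]
        _ = (β ≫ g) ≫ (q ≫ i) := by rw [Category.assoc]
        _ = (g ≫ (q ≫ i)) ≫ (q ≫ i) := by rw [hβ]
        _ = g ≫ ((q ≫ i) ≫ (q ≫ i)) := Category.assoc _ _ _
        _ = g ≫ (q ≫ i) := by rw [hee]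
        _ = β ≫ g := hβ
    have h2 := huniq (β ≫ β - β) (by rw [Preadditive.sub_comp, h1, sub_self])
    rwa [sub_eq_zero] at h2
  -- split β
  obtain ⟨b', s, p, hsp, hps⟩ := IsIdempotentComplete.idempotents_split b β hββ
  have hb' : b' ∈ L := hLsum b' b s p hsp hb
  have hsβ : s ≫ β = s := by rw [← hps, ← Category.assoc, hsp, Category.id_comp]
  have hβp : β ≫ p = p := by rw [← hps, Category.assoc, hsp, Category.comp_id]
  -- the map b' → a' and its cone
  obtain ⟨c₀, h₀, d₀, hT'⟩ := Pretriangulated.distinguished_cocone_triangle (s ≫ g ≫ q)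
  refine ⟨b', c₀, s ≫ g ≫ q, h₀, d₀, hT', hb', ?_⟩
  -- morphism of triangles (s, i, j) : T' → T
  have hcomm1 : (Triangle.mk (s ≫ g ≫ q) h₀ d₀).mor₁ ≫ i = s ≫ (Triangle.mk g h d).mor₁ := by
    calc (s ≫ g ≫ q) ≫ i = s ≫ (g ≫ (q ≫ i)) := by
          rw [Category.assoc, Category.assoc]
      _ = s ≫ (β ≫ g) := by rw [hβ]
      _ = (s ≫ β) ≫ g := by rw [Category.assoc]
      _ = s ≫ g := by rw [hsβ]
  obtain ⟨j, hj₁, hj₂⟩ := complete_distinguished_triangle_morphism _ _ hT' hT s i hcomm1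
  -- morphism of triangles (p, q, r) : T → T'
  have hcomm2 : (Triangle.mk g h d).mor₁ ≫ q = p ≫ (Triangle.mk (s ≫ g ≫ q) h₀ d₀).mor₁ := by
    calc g ≫ q = (g ≫ (q ≫ i)) ≫ q := by
          rw [Category.assoc, Category.assoc, hiq, Category.comp_id]
      _ = (β ≫ g) ≫ q := by rw [hβ]
      _ = β ≫ (g ≫ q) := Category.assoc _ _ _
      _ = (p ≫ s) ≫ (g ≫ q) := by rw [hps]
      _ = p ≫ s ≫ g ≫ q := Category.assoc _ _ _
  obtain ⟨r, hr₁, hr₂⟩ := complete_distinguished_triangle_morphism _ _ hT hT' p q hcomm2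
  dsimp only [Triangle.mk] at j r hj₁ hj₂ hr₁ hr₂
  -- ε := j ≫ r satisfies h₀ ≫ ε = h₀ and ε ≫ d₀ = d₀
  have hεh : h₀ ≫ (j ≫ r) = h₀ :=
    calc h₀ ≫ (j ≫ r) = (h₀ ≫ j) ≫ r := by rw [Category.assoc]
      _ = (i ≫ h) ≫ r := by rw [hj₁]
      _ = i ≫ (h ≫ r) := Category.assoc _ _ _
      _ = i ≫ (q ≫ h₀) := by rw [hr₁]
      _ = (i ≫ q) ≫ h₀ := by rw [Category.assoc]
      _ = h₀ := by rw [hiq, Category.id_comp]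
  have hεd : (j ≫ r) ≫ d₀ = d₀ :=
    calc (j ≫ r) ≫ d₀ = j ≫ (r ≫ d₀) := Category.assoc _ _ _
      _ = j ≫ (d ≫ (shiftFunctor D (1:ℤ)).map p) := by rw [← hr₂]
      _ = (j ≫ d) ≫ (shiftFunctor D (1:ℤ)).map p := by rw [Category.assoc]
      _ = (d₀ ≫ (shiftFunctor D (1:ℤ)).map s) ≫ (shiftFunctor D (1:ℤ)).map p := by rw [hj₂]
      _ = d₀ ≫ (shiftFunctor D (1:ℤ)).map (s ≫ p) := by
          rw [Category.assoc, ← Functor.map_comp]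
      _ = d₀ := by rw [hsp, CategoryTheory.Functor.map_id, Category.comp_id]
  -- ε - 1 factors in two ways
  obtain ⟨ψ, hψ⟩ := Triangle.yoneda_exact₃ _ hT' (j ≫ r - 𝟙 c₀)
    (by show h₀ ≫ (j ≫ r - 𝟙 c₀) = 0; rw [Preadditive.comp_sub, hεh, Category.comp_id, sub_self])
  obtain ⟨m, hm⟩ := Triangle.coyoneda_exact₃ _ hT' (j ≫ r - 𝟙 c₀)
    (by show (j ≫ r - 𝟙 c₀) ≫ d₀ = 0; rw [Preadditive.sub_comp, hεd, Category.id_comp, sub_self])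
  dsimp only [Triangle.mk] at ψ m hψ hm
  -- (ε - 1) has square zero
  have h₀d₀ : h₀ ≫ d₀ = 0 := comp_distTriang_mor_zero₂₃ _ hT'
  have hsq : (j ≫ r - 𝟙 c₀) ≫ (j ≫ r - 𝟙 c₀) = 0 := by
    nth_rewrite 1 [hm]
    rw [hψ]
    rw [Category.assoc, ← Category.assoc h₀ d₀ ψ, h₀d₀, zero_comp, comp_zero]
  -- hence ε is invertible with inverse 𝟙 - (ε - 𝟙)
  simp only [Preadditive.sub_comp, Preadditive.comp_sub, Category.id_comp,
    Category.comp_id] at hsq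
  rw [sub_eq_zero] at hsq
  have hinv : (j ≫ r) ≫ (𝟙 c₀ - (j ≫ r - 𝟙 c₀)) = 𝟙 c₀ := by
    simp only [Preadditive.comp_sub, Category.comp_id]
    rw [hsq]
    exact sub_sub_cancel _ _
  -- so c₀ is a retract of c
  have hret : j ≫ (r ≫ (𝟙 c₀ - (j ≫ r - 𝟙 c₀))) = 𝟙 c₀ := by
    rw [← Category.assoc]; exact hinv
  exact hRsum c₀ c j (r ≫ (𝟙 c₀ - (j ≫ r - 𝟙 c₀))) hret hc
end

section
/- Let D be a pretriangulated category and let b →g a →h c →δ b[1] be a distinguished triangle with Hom(b, c) = 0 and Hom(b, c[-1]) = 0. Then every endomorphism p : a → a admits a unique endomorphism p_b : b → b with g ∘ p_b = p ∘ g; moreover, if p is idempotent (p ∘ p = p), then p_b is idempotent. -/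
/-!
STATEMENT 6: Let `D` be a pretriangulated category and `b →g a →h c →δ b[1]` a
distinguished triangle with `Hom(b, c) = 0` and `Hom(b, c[-1]) = 0`.  Then every
endomorphism `p : a → a` admits a unique endomorphism `p_b : b → b` with
`g ∘ p_b = p ∘ g`; moreover if `p` is idempotent then `p_b` is idempotent.
-/

open CategoryTheory CategoryTheory.Limits CategoryTheory.Pretriangulated ZeroObject

universe v u

variable {D : Type u} [Category.{v} D] [HasZeroObject D] [HasShift D ℤ] [Preadditive D]
  [∀ n : ℤ, (CategoryTheory.shiftFunctor D n).Additive] [Pretriangulated D]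

theorem stmt6 (b a c : D) (g : b ⟶ a) (h : a ⟶ c) (δ : c ⟶ (b⟦(1 : ℤ)⟧ : D))
    (hT : Triangle.mk g h δ ∈ distTriang D)
    (h0 : ∀ f : b ⟶ c, f = 0)
    (h1 : ∀ f : b ⟶ (c⟦(-1 : ℤ)⟧ : D), f = 0)
    (p : a ⟶ a) :
    (∃! pb : b ⟶ b, pb ≫ g = g ≫ p) ∧
      (p ≫ p = p → ∀ pb : b ⟶ b, pb ≫ g = g ≫ p → pb ≫ pb = pb) := by
  have hzero : ∀ f : b ⟶ b, f ≫ g = 0 → f = 0 := by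
    intro f hf
    obtain ⟨e, he⟩ := Triangle.coyoneda_exact₂ _ (inv_rot_of_distTriang _ hT) f hf
    rw [he, h1 e]; exact zero_comp
  have huniq : ∀ pb pb' : b ⟶ b, pb ≫ g = g ≫ p → pb' ≫ g = g ≫ p → pb = pb' := by
    intro pb pb' h₁ h₂
    have : (pb - pb') ≫ g = 0 := by rw [Preadditive.sub_comp, h₁, h₂, sub_self]
    have := hzero _ this
    rwa [sub_eq_zero] at this
  obtain ⟨pb, hpb⟩ := Triangle.coyoneda_exact₂ _ hT (g ≫ p) (by
    change (g ≫ p) ≫ h = 0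
    rw [Category.assoc]
    change g ≫ p ≫ h = 0
    rw [← h0 (g ≫ p ≫ h)])
  refine ⟨⟨pb, hpb.symm, fun y hy => huniq y pb hy hpb.symm⟩, ?_⟩
  intro hp pb' hpb'
  exact huniq _ _ (by rw [Category.assoc, hpb', ← Category.assoc, hpb', Category.assoc, hp]) hpb'
end

section
/- Let D be a triangulated category and let (D≤, D>) be an m-structure on D, i.e. a pair of full subcategories that is simultaneously a t-structure and a weight structure. Then D≤ and D> are strictly full triangulated subcategories of D: each is closed under the shifts [1] and [-1], under cones of morphisms (equivalently, under extensions together with shifts), and under direct summands. -/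
/-!
STATEMENT 8: Let `D` be a triangulated category and `(D≤, D>)` an m-structure on `D`
(simultaneously a t-structure and a weight structure).  Then `D≤` and `D>` are
strictly full triangulated subcategories of `D`: each is closed under the shifts
`[1]` and `[-1]`, under cones of morphisms (equivalently, under extensions together
with shifts), and under direct summands.
-/

open CategoryTheory CategoryTheory.Limits CategoryTheory.Pretriangulated ZeroObject

universe v u

variable (D : Type u) [Category.{v} D] [HasZeroObject D] [HasShift D ℤ] [Preadditive D]
  [∀ n : ℤ, (CategoryTheory.shiftFunctor D n).Additive] [Pretriangulated D]

/-- `(Dle, Dgt)` is an m-structure on `D`: a pair of strictly full subcategories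
which is simultaneously a t-structure (orthogonality, invariance, decomposition)
and a weight structure (Karoubi-closedness, orthogonality, co-invariance,
decomposition) on `D`. -/
structure IsMStructure (Dle Dgt : Set D) : Prop where
  le_iso : ∀ ⦃x y : D⦄, (x ≅ y) → x ∈ Dle → y ∈ Dle
  gt_iso : ∀ ⦃x y : D⦄, (x ≅ y) → x ∈ Dgt → y ∈ Dgt
  /-- Orthogonality: `Hom(a, b) = 0` for `a ∈ Dle`, `b ∈ Dgt`. -/
  orth : ∀ a ∈ Dle, ∀ b ∈ Dgt, ∀ f : a ⟶ b, f = 0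
  /-- t-structure invariance: `Dle[1] ⊆ Dle`. -/
  le_shift : ∀ x ∈ Dle, (x⟦(1 : ℤ)⟧ : D) ∈ Dle
  /-- t-structure invariance: `Dgt[-1] ⊆ Dgt`. -/
  gt_negShift : ∀ x ∈ Dgt, (x⟦(-1 : ℤ)⟧ : D) ∈ Dgt
  /-- weight structure co-invariance: `Dle[-1] ⊆ Dle`. -/
  le_negShift : ∀ x ∈ Dle, (x⟦(-1 : ℤ)⟧ : D) ∈ Dle
  /-- weight structure co-invariance: `Dgt[1] ⊆ Dgt`. -/
  gt_shift : ∀ x ∈ Dgt, (x⟦(1 : ℤ)⟧ : D) ∈ Dgt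
  /-- `Dle` is Karoubi-closed (closed under direct summands). -/
  le_summand : ∀ (x y : D) (i : x ⟶ y) (r : y ⟶ x), i ≫ r = 𝟙 x → y ∈ Dle → x ∈ Dle
  /-- `Dgt` is Karoubi-closed (closed under direct summands). -/
  gt_summand : ∀ (x y : D) (i : x ⟶ y) (r : y ⟶ x), i ≫ r = 𝟙 x → y ∈ Dgt → x ∈ Dgt
  /-- Decomposition: every object of `D` fits in a distinguished triangle
  `a≤ → a → a> → a≤[1]` with `a≤ ∈ Dle` and `a> ∈ Dgt`. -/
  decomp : ∀ a : D, ∃ (x y : D) (f : x ⟶ a) (g : a ⟶ y) (d : y ⟶ (x⟦(1 : ℤ)⟧ : D)),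
      (Triangle.mk f g d ∈ distTriang D) ∧ x ∈ Dle ∧ y ∈ Dgt

theorem stmt8 [IsTriangulated D] (Dle Dgt : Set D) (h : IsMStructure D Dle Dgt) :
    -- closure under the shifts `[1]` and `[-1]`
    (∀ x ∈ Dle, (x⟦(1 : ℤ)⟧ : D) ∈ Dle ∧ (x⟦(-1 : ℤ)⟧ : D) ∈ Dle) ∧
    (∀ x ∈ Dgt, (x⟦(1 : ℤ)⟧ : D) ∈ Dgt ∧ (x⟦(-1 : ℤ)⟧ : D) ∈ Dgt) ∧
    -- closure under cones of morphisms
    (∀ T : Triangle D, (T ∈ distTriang D) → T.obj₁ ∈ Dle → T.obj₂ ∈ Dle → T.obj₃ ∈ Dle) ∧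
    (∀ T : Triangle D, (T ∈ distTriang D) → T.obj₁ ∈ Dgt → T.obj₂ ∈ Dgt → T.obj₃ ∈ Dgt) ∧
    -- equivalently, closure under extensions
    (∀ T : Triangle D, (T ∈ distTriang D) → T.obj₁ ∈ Dle → T.obj₃ ∈ Dle → T.obj₂ ∈ Dle) ∧
    (∀ T : Triangle D, (T ∈ distTriang D) → T.obj₁ ∈ Dgt → T.obj₃ ∈ Dgt → T.obj₂ ∈ Dgt) ∧
    -- closure under direct summands
    (∀ (x y : D) (i : x ⟶ y) (r : y ⟶ x), i ≫ r = 𝟙 x → y ∈ Dle → x ∈ Dle) ∧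
    (∀ (x y : D) (i : x ⟶ y) (r : y ⟶ x), i ≫ r = 𝟙 x → y ∈ Dgt → x ∈ Dgt) := by
  -- helper: if in the weight decomposition of `a` the map `a ⟶ y` is zero then `a ∈ Dle`
  have le_of : ∀ (a : D), (∀ b ∈ Dgt, ∀ g : a ⟶ b, g = 0) → a ∈ Dle := by
    intro a ha
    obtain ⟨x, y, f, g, d, hT, hx, hy⟩ := h.decomp a
    obtain ⟨r, hr⟩ := Triangle.coyoneda_exact₂ _ hT (𝟙 a)
      (by simp [ha y hy g]; exact comp_zero)
    exact h.le_summand a x r f hr.symm hx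
  have gt_of : ∀ (a : D), (∀ b ∈ Dle, ∀ f : b ⟶ a, f = 0) → a ∈ Dgt := by
    intro a ha
    obtain ⟨x, y, f, g, d, hT, hx, hy⟩ := h.decomp a
    obtain ⟨s, hs⟩ := Triangle.yoneda_exact₂ _ hT (𝟙 a)
      (by simp [ha x hx f]; exact zero_comp)
    exact h.gt_summand a y g s hs.symm hy
  refine ⟨fun x hx => ⟨h.le_shift x hx, h.le_negShift x hx⟩,
    fun x hx => ⟨h.gt_shift x hx, h.gt_negShift x hx⟩, ?_, ?_, ?_, ?_,
    h.le_summand, h.gt_summand⟩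
  · intro T hT h1 h2
    refine le_of _ (fun b hb g => ?_)
    have : T.mor₂ ≫ g = 0 := h.orth _ h2 _ hb _
    obtain ⟨k, hk⟩ := Triangle.yoneda_exact₃ _ hT g this
    rw [hk, h.orth _ (h.le_shift _ h1) _ hb k, comp_zero]
  · intro T hT h1 h2
    refine gt_of _ (fun b hb f => ?_)
    have : f ≫ T.mor₃ = 0 := h.orth _ hb _ (h.gt_shift _ h1) _
    obtain ⟨k, hk⟩ := Triangle.coyoneda_exact₃ _ hT f this
    rw [hk, h.orth _ hb _ h2 k, zero_comp]
  · intro T hT h1 h3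
    refine le_of _ (fun b hb g => ?_)
    have : T.mor₁ ≫ g = 0 := h.orth _ h1 _ hb _
    obtain ⟨k, hk⟩ := Triangle.yoneda_exact₂ _ hT g this
    rw [hk, h.orth _ h3 _ hb k, comp_zero]
  · intro T hT h1 h3
    refine gt_of _ (fun b hb f => ?_)
    have : f ≫ T.mor₂ = 0 := h.orth _ hb _ h3 _
    obtain ⟨k, hk⟩ := Triangle.coyoneda_exact₂ _ hT f this
    rw [hk, h.orth _ hb _ h1 k, zero_comp]
end

section
/- Let D be a triangulated category and let (D≤, D>) be an m-structure on D. For each object a of D, let a≤ → a → a> → a≤[1] denote its decomposition triangle with a≤ ∈ D≤ and a> ∈ D> (which, by orthogonality, is unique up to unique isomorphism and functorial in a). Then the truncation functors a ↦ a≤ and a ↦ a> are triangulated functors: they commute with the shift up to natural isomorphism, and for every distinguished triangle x → y → z → x[1] in D the induced triangles x≤ → y≤ → z≤ → x≤[1] and x> → y> → z> → x>[1] are distinguished. -/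
/-!
STATEMENT 9: Let `D` be a triangulated category and `(D≤, D>)` an m-structure on `D`.
The decomposition triangles `a≤ → a → a> → a≤[1]` are functorial in `a`, and the
truncation functors `a ↦ a≤`, `a ↦ a>` are triangulated: they commute with the shift
up to natural isomorphism, and for every distinguished triangle `x → y → z → x[1]`
the induced triangles `x≤ → y≤ → z≤ → x≤[1]` and `x> → y> → z> → x>[1]` are
distinguished.
-/

open CategoryTheory CategoryTheory.Limits CategoryTheory.Pretriangulated ZeroObject

universe v u

variable (D : Type u) [Category.{v} D] [HasZeroObject D] [HasShift D ℤ] [Preadditive D]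
  [∀ n : ℤ, (CategoryTheory.shiftFunctor D n).Additive] [Pretriangulated D]

namespace MSAux

variable {D}
variable {Dle Dgt : Set D} (h : IsMStructure D Dle Dgt)
include h

/-- Lifting through the first map of a decomposition-type triangle. -/
lemma lift_eu {T : Triangle D} (hT : T ∈ distTriang D) (h3 : T.obj₃ ∈ Dgt)
    {w : D} (hw : w ∈ Dle) (g : w ⟶ T.obj₂) : ∃! l : w ⟶ T.obj₁, l ≫ T.mor₁ = g := by
  obtain ⟨l, hl⟩ := Triangle.coyoneda_exact₂ T hT g (h.orth _ hw _ h3 _)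
  refine ⟨l, hl.symm, fun y hy => ?_⟩
  simp only at hy
  have hz : (y - l) ≫ T.mor₁ = 0 := by rw [Preadditive.sub_comp, hy, ← hl, sub_self]
  obtain ⟨m, hm⟩ := Triangle.coyoneda_exact₂ _ (inv_rot_of_distTriang T hT) (y - l) hz
  have : m = 0 := h.orth _ hw _ (h.gt_negShift _ h3) m
  rw [this, zero_comp] at hm
  exact sub_eq_zero.mp hm

/-- Colifting through the second map of a decomposition-type triangle. -/
lemma colift_eu {T : Triangle D} (hT : T ∈ distTriang D) (h1 : T.obj₁ ∈ Dle)
    {w : D} (hw : w ∈ Dgt) (g : T.obj₂ ⟶ w) : ∃! l : T.obj₃ ⟶ w, T.mor₂ ≫ l = g := by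
  obtain ⟨l, hl⟩ := Triangle.yoneda_exact₂ T hT g (h.orth _ h1 _ hw _)
  refine ⟨l, hl.symm, fun y hy => ?_⟩
  simp only at hy
  have hz : T.mor₂ ≫ (y - l) = 0 := by rw [Preadditive.comp_sub, hy, ← hl, sub_self]
  obtain ⟨m, hm⟩ := Triangle.yoneda_exact₂ _ (rot_of_distTriang T hT) (y - l) hz
  have : m = 0 := h.orth _ (h.le_shift _ h1) _ hw m
  rw [this, comp_zero] at hm
  exact sub_eq_zero.mp hm

/-- Factoring a map (from a `Dle` object) to the third object through the second. -/
lemma ext_le {T : Triangle D} (hT : T ∈ distTriang D) (h1 : T.obj₁ ∈ Dgt)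
    {w : D} (hw : w ∈ Dle) (g : w ⟶ T.obj₃) : ∃! l : w ⟶ T.obj₂, l ≫ T.mor₂ = g := by
  obtain ⟨l, hl⟩ := Triangle.coyoneda_exact₃ T hT g (h.orth _ hw _ (h.gt_shift _ h1) _)
  refine ⟨l, hl.symm, fun y hy => ?_⟩
  simp only at hy
  have hz : (y - l) ≫ T.mor₂ = 0 := by rw [Preadditive.sub_comp, hy, ← hl, sub_self]
  obtain ⟨m, hm⟩ := Triangle.coyoneda_exact₂ T hT (y - l) hz
  have : m = 0 := h.orth _ hw _ h1 m
  rw [this, zero_comp] at hm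
  rw [← sub_eq_zero, hm]

/-- Factoring a map (to a `Dgt` object) from the first object through the second. -/
lemma ext_gt {T : Triangle D} (hT : T ∈ distTriang D) (h3 : T.obj₃ ∈ Dle)
    {w : D} (hw : w ∈ Dgt) (g : T.obj₁ ⟶ w) : ∃! l : T.obj₂ ⟶ w, T.mor₁ ≫ l = g := by
  obtain ⟨l, hl⟩ := Triangle.yoneda_exact₂ _ (inv_rot_of_distTriang T hT) g
    (h.orth _ (h.le_negShift _ h3) _ hw _)
  have hl' : T.mor₁ ≫ l = g := hl.symm
  refine ⟨l, hl', fun y hy => ?_⟩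
  simp only at hy
  have hz : T.mor₁ ≫ y - T.mor₁ ≫ l = 0 := by rw [hy, hl', sub_self]
  erw [← Preadditive.comp_sub] at hz
  obtain ⟨m, hm⟩ := Triangle.yoneda_exact₂ T hT _ hz
  have hm0 : m = 0 := h.orth _ h3 _ hw m
  rw [hm0, comp_zero] at hm
  erw [← sub_eq_zero, hm]

/-- `Dle` is closed under extensions. -/
lemma le_ext₂ {T : Triangle D} (hT : T ∈ distTriang D) (h1 : T.obj₁ ∈ Dle)
    (h3 : T.obj₃ ∈ Dle) : T.obj₂ ∈ Dle := by
  obtain ⟨x, y, i, p, dd, hTd, hx, hy⟩ := h.decomp T.obj₂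
  have hp0 : p = 0 := by
    obtain ⟨m, hm⟩ := Triangle.yoneda_exact₂ T hT p (h.orth _ h1 _ hy _)
    rw [hm, h.orth _ h3 _ hy m, comp_zero]
  obtain ⟨s, hs⟩ := Triangle.coyoneda_exact₂ _ hTd (𝟙 T.obj₂)
    (by erw [Category.id_comp]; exact hp0)
  exact h.le_summand T.obj₂ x s i hs.symm hx

/-- `Dgt` is closed under extensions. -/
lemma gt_ext₂ {T : Triangle D} (hT : T ∈ distTriang D) (h1 : T.obj₁ ∈ Dgt)
    (h3 : T.obj₃ ∈ Dgt) : T.obj₂ ∈ Dgt := by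
  obtain ⟨x, y, i, p, dd, hTd, hx, hy⟩ := h.decomp T.obj₂
  have hi0 : i = 0 := by
    obtain ⟨m, hm⟩ := Triangle.coyoneda_exact₂ T hT i (h.orth _ hx _ h3 _)
    rw [hm, h.orth _ hx _ h1 m, zero_comp]
  obtain ⟨r, hr⟩ := Triangle.yoneda_exact₂ _ hTd (𝟙 T.obj₂)
    (by erw [Category.comp_id]; exact hi0)
  exact h.gt_summand T.obj₂ y p r hr.symm hy

lemma le_cone {T : Triangle D} (hT : T ∈ distTriang D) (h1 : T.obj₁ ∈ Dle)
    (h2 : T.obj₂ ∈ Dle) : T.obj₃ ∈ Dle :=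
  le_ext₂ h (rot_of_distTriang T hT) h2 (h.le_shift _ h1)

lemma gt_cone {T : Triangle D} (hT : T ∈ distTriang D) (h1 : T.obj₁ ∈ Dgt)
    (h2 : T.obj₂ ∈ Dgt) : T.obj₃ ∈ Dgt :=
  gt_ext₂ h (rot_of_distTriang T hT) h2 (h.gt_shift _ h1)


end MSAux

namespace MSAux

variable {D : Type u} [Category.{v} D] [HasZeroObject D] [HasShift D ℤ] [Preadditive D]
  [∀ n : ℤ, (CategoryTheory.shiftFunctor D n).Additive] [Pretriangulated D]
  {Dle Dgt : Set D}

/-- A chosen decomposition of an object. -/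
structure Dec (Dle Dgt : Set D) (a : D) where
  le : D
  gt : D
  ι : le ⟶ a
  π : a ⟶ gt
  δ : gt ⟶ (le⟦(1 : ℤ)⟧ : D)
  mem : Triangle.mk ι π δ ∈ distTriang D
  hle : le ∈ Dle
  hgt : gt ∈ Dgt

noncomputable def dec (h : IsMStructure D Dle Dgt) (a : D) : Dec Dle Dgt a :=
  Classical.choice (by
    obtain ⟨x, y, f, g, d, hd, hx, hy⟩ := h.decomp a
    exact ⟨⟨x, y, f, g, d, hd, hx, hy⟩⟩)

variable (h : IsMStructure D Dle Dgt)

/-- Lift of a map from a `Dle` object through `(dec h a).ι`. -/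
noncomputable def lft {w a : D} (hw : w ∈ Dle) (g : w ⟶ a) : w ⟶ (dec h a).le :=
  (lift_eu h (dec h a).mem (dec h a).hgt hw g).exists.choose

lemma lft_ι {w a : D} (hw : w ∈ Dle) (g : w ⟶ a) : lft h hw g ≫ (dec h a).ι = g :=
  (lift_eu h (dec h a).mem (dec h a).hgt hw g).exists.choose_spec

lemma le_cancel {w a : D} (hw : w ∈ Dle) {l l' : w ⟶ (dec h a).le}
    (H : l ≫ (dec h a).ι = l' ≫ (dec h a).ι) : l = l' :=
  (lift_eu h (dec h a).mem (dec h a).hgt hw (l' ≫ (dec h a).ι)).unique H rfl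

/-- Colift of a map to a `Dgt` object through `(dec h a).π`. -/
noncomputable def colft {w a : D} (hw : w ∈ Dgt) (g : a ⟶ w) : (dec h a).gt ⟶ w :=
  (colift_eu h (dec h a).mem (dec h a).hle hw g).exists.choose

lemma π_colft {w a : D} (hw : w ∈ Dgt) (g : a ⟶ w) : (dec h a).π ≫ colft h hw g = g :=
  (colift_eu h (dec h a).mem (dec h a).hle hw g).exists.choose_spec

lemma gt_cancel {w a : D} (hw : w ∈ Dgt) {l l' : (dec h a).gt ⟶ w}
    (H : (dec h a).π ≫ l = (dec h a).π ≫ l') : l = l' :=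
  (colift_eu h (dec h a).mem (dec h a).hle hw ((dec h a).π ≫ l')).unique H rfl

/-- The truncation functor `a ↦ a≤`. -/
noncomputable def Fle : D ⥤ D where
  obj a := (dec h a).le
  map {a b} f := lft h (dec h a).hle ((dec h a).ι ≫ f)
  map_id a := by
    refine (le_cancel h (dec h a).hle ?_).symm
    rw [lft_ι]
    simp
  map_comp {a b c} f g := by
    refine (le_cancel h (dec h a).hle ?_).symm
    rw [lft_ι, Category.assoc, lft_ι, ← Category.assoc, lft_ι, Category.assoc]

lemma Fle_map_ι {a b : D} (f : a ⟶ b) :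
    (Fle h).map f ≫ (dec h b).ι = (dec h a).ι ≫ f :=
  lft_ι h (dec h a).hle ((dec h a).ι ≫ f)

/-- The truncation functor `a ↦ a>`. -/
noncomputable def Fgt : D ⥤ D where
  obj a := (dec h a).gt
  map {a b} f := colft h (dec h b).hgt (f ≫ (dec h b).π)
  map_id a := by
    refine (gt_cancel h (dec h a).hgt ?_).symm
    rw [π_colft]
    simp
  map_comp {a b c} f g := by
    refine (gt_cancel h (dec h c).hgt ?_).symm
    rw [π_colft, ← Category.assoc, π_colft, Category.assoc, π_colft, ← Category.assoc]

lemma π_Fgt_map {a b : D} (f : a ⟶ b) :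
    (dec h a).π ≫ (Fgt h).map f = f ≫ (dec h b).π :=
  π_colft h (dec h b).hgt (f ≫ (dec h b).π)

lemma Fgt_map_δ {a b : D} (f : a ⟶ b) :
    (Fgt h).map f ≫ (dec h b).δ = (dec h a).δ ≫ ((Fle h).map f)⟦(1 : ℤ)⟧' := by
  obtain ⟨c, hc₁, hc₂⟩ := complete_distinguished_triangle_morphism _ _
    (dec h a).mem (dec h b).mem ((Fle h).map f) f (Fle_map_ι h f).symm
  have : c = (Fgt h).map f := gt_cancel h (dec h b).hgt (by erw [π_Fgt_map]; exact hc₁)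
  rw [← this]
  exact hc₂.symm

end MSAux

namespace MSAux

variable {D : Type u} [Category.{v} D] [HasZeroObject D] [HasShift D ℤ] [Preadditive D]
  [∀ n : ℤ, (CategoryTheory.shiftFunctor D n).Additive] [Pretriangulated D]
  {Dle Dgt : Set D} (h : IsMStructure D Dle Dgt)

/-- The triple rotation of the chosen decomposition triangle of `a`. -/
noncomputable def S (a : D) : Triangle D :=
  (Triangle.mk (dec h a).ι (dec h a).π (dec h a).δ).rotate.rotate.rotate

lemma S_mem (a : D) : S h a ∈ distTriang D :=
  rot_of_distTriang _ (rot_of_distTriang _ (rot_of_distTriang _ (dec h a).mem))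

lemma S_mor₁ (a : D) : (S h a).mor₁ = -((dec h a).ι⟦(1 : ℤ)⟧') := by
  rfl

lemma S_mor₂ (a : D) : (S h a).mor₂ = -((dec h a).π⟦(1 : ℤ)⟧') := by
  rfl

lemma shift_lift_eu (a : D) {w : D} (hw : w ∈ Dle) (g : w ⟶ ((a : D)⟦(1 : ℤ)⟧ : D)) :
    ∃! l : w ⟶ (((dec h a).le)⟦(1 : ℤ)⟧ : D), l ≫ ((dec h a).ι⟦(1 : ℤ)⟧') = g := by
  have h3 : (S h a).obj₃ ∈ Dgt := h.gt_shift _ (dec h a).hgt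
  obtain ⟨l, hl, hu⟩ := lift_eu h (S_mem h a) h3 hw (show w ⟶ (S h a).obj₂ from g)
  rw [S_mor₁] at hl
  refine ⟨-l, by
    show (-l) ≫ ((dec h a).ι⟦(1 : ℤ)⟧') = _
    erw [Preadditive.neg_comp, ← Preadditive.comp_neg]; exact hl, fun y hy => ?_⟩
  simp only at hy
  have hyl : -y = l := hu (-y) (by
    show (-y) ≫ (S h a).mor₁ = _
    erw [S_mor₁, Preadditive.neg_comp, Preadditive.comp_neg, neg_neg]
    exact hy)
  erw [← hyl, neg_neg]

lemma shift_colift_eu (a : D) {w : D} (hw : w ∈ Dgt) (g : ((a : D)⟦(1 : ℤ)⟧ : D) ⟶ w) :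
    ∃! l : (((dec h a).gt)⟦(1 : ℤ)⟧ : D) ⟶ w, ((dec h a).π⟦(1 : ℤ)⟧') ≫ l = g := by
  have h1 : (S h a).obj₁ ∈ Dle := h.le_shift _ (dec h a).hle
  obtain ⟨l, hl, hu⟩ := colift_eu h (S_mem h a) h1 hw (show (S h a).obj₂ ⟶ w from g)
  rw [S_mor₂] at hl
  refine ⟨-l, by
    show ((dec h a).π⟦(1 : ℤ)⟧') ≫ (-l) = _
    erw [Preadditive.comp_neg, ← Preadditive.neg_comp]; exact hl, fun y hy => ?_⟩
  simp only at hy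
  have hyl : -y = l := hu (-y) (by
    show (S h a).mor₂ ≫ (-y) = _
    erw [S_mor₂, Preadditive.comp_neg, Preadditive.neg_comp, neg_neg]
    exact hy)
  erw [← hyl, neg_neg]

lemma le_shift_cancel (a : D) {w : D} (hw : w ∈ Dle)
    {l l' : w ⟶ (((dec h a).le)⟦(1 : ℤ)⟧ : D)}
    (H : l ≫ ((dec h a).ι⟦(1 : ℤ)⟧') = l' ≫ ((dec h a).ι⟦(1 : ℤ)⟧')) : l = l' :=
  (shift_lift_eu h a hw (l' ≫ ((dec h a).ι⟦(1 : ℤ)⟧'))).unique H rfl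

lemma gt_shift_cancel (a : D) {w : D} (hw : w ∈ Dgt)
    {l l' : (((dec h a).gt)⟦(1 : ℤ)⟧ : D) ⟶ w}
    (H : ((dec h a).π⟦(1 : ℤ)⟧') ≫ l = ((dec h a).π⟦(1 : ℤ)⟧') ≫ l') : l = l' :=
  (shift_colift_eu h a hw (((dec h a).π⟦(1 : ℤ)⟧') ≫ l')).unique H rfl

lemma le_iso_exists (a : D) :
    ∃ e : (dec h ((a : D)⟦(1 : ℤ)⟧ : D)).le ≅ (((dec h a).le)⟦(1 : ℤ)⟧ : D),
      e.hom ≫ ((dec h a).ι⟦(1 : ℤ)⟧') = (dec h ((a : D)⟦(1 : ℤ)⟧ : D)).ι := by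
  obtain ⟨f, hf, -⟩ := shift_lift_eu h a (dec h ((a : D)⟦(1 : ℤ)⟧ : D)).hle
    (dec h ((a : D)⟦(1 : ℤ)⟧ : D)).ι
  set g := lft h (h.le_shift _ (dec h a).hle) ((dec h a).ι⟦(1 : ℤ)⟧') with hgdef
  have hg : g ≫ (dec h ((a : D)⟦(1 : ℤ)⟧ : D)).ι = (dec h a).ι⟦(1 : ℤ)⟧' :=
    lft_ι h (h.le_shift _ (dec h a).hle) _
  refine ⟨⟨f, g, ?_, ?_⟩, hf⟩
  · refine le_cancel h (dec h ((a : D)⟦(1 : ℤ)⟧ : D)).hle ?_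
    rw [Category.assoc, hg, hf, Category.id_comp]
  · refine le_shift_cancel h a (h.le_shift _ (dec h a).hle) ?_
    rw [Category.assoc, hf, hg, Category.id_comp]

lemma gt_iso_exists (a : D) :
    ∃ e : (dec h ((a : D)⟦(1 : ℤ)⟧ : D)).gt ≅ (((dec h a).gt)⟦(1 : ℤ)⟧ : D),
      (dec h ((a : D)⟦(1 : ℤ)⟧ : D)).π ≫ e.hom = (dec h a).π⟦(1 : ℤ)⟧' := by
  obtain ⟨g, hg, -⟩ := shift_colift_eu h a (dec h ((a : D)⟦(1 : ℤ)⟧ : D)).hgt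
    (dec h ((a : D)⟦(1 : ℤ)⟧ : D)).π
  set f := colft h (h.gt_shift _ (dec h a).hgt) ((dec h a).π⟦(1 : ℤ)⟧') with hfdef
  have hf : (dec h ((a : D)⟦(1 : ℤ)⟧ : D)).π ≫ f = (dec h a).π⟦(1 : ℤ)⟧' :=
    π_colft h (h.gt_shift _ (dec h a).hgt) _
  refine ⟨⟨f, g, ?_, ?_⟩, hf⟩
  · refine gt_cancel h (dec h ((a : D)⟦(1 : ℤ)⟧ : D)).hgt ?_
    rw [← Category.assoc, hf, hg, Category.comp_id]
  · refine gt_shift_cancel h a (h.gt_shift _ (dec h a).hgt) ?_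
    rw [← Category.assoc, hg, hf, Category.comp_id]

lemma leShift :
    Nonempty (shiftFunctor D (1 : ℤ) ⋙ Fle h ≅ Fle h ⋙ shiftFunctor D (1 : ℤ)) := by
  choose e he using le_iso_exists h
  refine ⟨NatIso.ofComponents e ?_⟩
  intro a b f
  refine le_shift_cancel h b (dec h ((a : D)⟦(1 : ℤ)⟧ : D)).hle ?_
  have l1 : ((shiftFunctor D (1 : ℤ) ⋙ Fle h).map f ≫ (e b).hom) ≫ ((dec h b).ι⟦(1 : ℤ)⟧')
      = (dec h ((a : D)⟦(1 : ℤ)⟧ : D)).ι ≫ (f⟦(1 : ℤ)⟧') := by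
    erw [Category.assoc, he]
    exact Fle_map_ι h (f⟦(1 : ℤ)⟧')
  have l2 : ((e a).hom ≫ (Fle h ⋙ shiftFunctor D (1 : ℤ)).map f) ≫ ((dec h b).ι⟦(1 : ℤ)⟧')
      = (dec h ((a : D)⟦(1 : ℤ)⟧ : D)).ι ≫ (f⟦(1 : ℤ)⟧') := by
    have l3 : (Fle h ⋙ shiftFunctor D (1 : ℤ)).map f ≫ ((dec h b).ι⟦(1 : ℤ)⟧') =
        ((dec h a).ι⟦(1 : ℤ)⟧') ≫ (f⟦(1 : ℤ)⟧') := by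
      erw [show (Fle h ⋙ shiftFunctor D (1 : ℤ)).map f = ((Fle h).map f)⟦(1 : ℤ)⟧' from rfl,
        ← Functor.map_comp (shiftFunctor D (1 : ℤ)) ((Fle h).map f), Fle_map_ι h f, Functor.map_comp]
      rfl
    erw [Category.assoc, l3, ← Category.assoc, he]
  erw [l1, l2]

lemma gtShift :
    Nonempty (shiftFunctor D (1 : ℤ) ⋙ Fgt h ≅ Fgt h ⋙ shiftFunctor D (1 : ℤ)) := by
  choose e he using gt_iso_exists h
  refine ⟨NatIso.ofComponents e ?_⟩
  intro a b f
  refine gt_cancel h (h.gt_shift _ (dec h b).hgt) ?_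
  have l1 : (dec h ((a : D)⟦(1 : ℤ)⟧ : D)).π ≫
      ((shiftFunctor D (1 : ℤ) ⋙ Fgt h).map f ≫ (e b).hom) = (f⟦(1 : ℤ)⟧') ≫
      ((dec h b).π⟦(1 : ℤ)⟧') := by
    erw [show (shiftFunctor D 1 ⋙ Fgt h).map f = (Fgt h).map (f⟦(1 : ℤ)⟧') from rfl]
    exact (Category.assoc _ _ _).symm.trans
      (by erw [π_Fgt_map h (f⟦(1 : ℤ)⟧'), Category.assoc, he])
  have l2 : (dec h ((a : D)⟦(1 : ℤ)⟧ : D)).π ≫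
      ((e a).hom ≫ (Fgt h ⋙ shiftFunctor D (1 : ℤ)).map f) = (f⟦(1 : ℤ)⟧') ≫
      ((dec h b).π⟦(1 : ℤ)⟧') := by
    erw [← Category.assoc, he,
      show (Fgt h ⋙ shiftFunctor D (1 : ℤ)).map f = ((Fgt h).map f)⟦(1 : ℤ)⟧' from rfl,
      ← Functor.map_comp, π_Fgt_map h f, Functor.map_comp]
    rfl
  erw [l1, l2]

end MSAux

namespace MSAux

variable {D : Type u} [Category.{v} D] [HasZeroObject D] [HasShift D ℤ] [Preadditive D]
  [∀ n : ℤ, (CategoryTheory.shiftFunctor D n).Additive] [Pretriangulated D]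
  [IsTriangulated D] {Dle Dgt : Set D} (h : IsMStructure D Dle Dgt)

lemma le_des (T : Triangle D) (hT : T ∈ distTriang D) :
    ∃ d : (Fle h).obj T.obj₃ ⟶ (((Fle h).obj T.obj₁)⟦(1 : ℤ)⟧ : D),
      Triangle.mk ((Fle h).map T.mor₁) ((Fle h).map T.mor₂) d ∈ distTriang D := by
  obtain ⟨C, vC, wC, hC⟩ := distinguished_cocone_triangle ((Fle h).map T.mor₁)
  have hCle : C ∈ Dle := le_cone h hC (dec h T.obj₁).hle (dec h T.obj₂).hle
  obtain ⟨W, qW, rW, hW⟩ := distinguished_cocone_triangle ((dec h T.obj₁).ι ≫ T.mor₁)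
  have O₁ := Triangulated.someOctahedron rfl (dec h T.obj₁).mem hT hW
  have O₂ := Triangulated.someOctahedron (Fle_map_ι h T.mor₁) hC (dec h T.obj₂).mem hW
  obtain ⟨e, he, -⟩ := lift_eu h (dec h T.obj₃).mem (dec h T.obj₃).hgt hCle (O₂.m₁ ≫ O₁.m₃)
  simp only [Triangle.mk_obj₁, Triangle.mk_obj₂, Triangle.mk_obj₃, Triangle.mk_mor₁,
    Triangle.mk_mor₂, Triangle.mk_mor₃] at he
  have hvC : vC ≫ e = (Fle h).map T.mor₂ := by
    apply le_cancel h (dec h T.obj₂).hle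
    erw [Category.assoc, he, ← Category.assoc, O₂.comm₁, Category.assoc, O₁.comm₃, Fle_map_ι]
  obtain ⟨t, ht, -⟩ := ext_le h O₁.mem (dec h T.obj₁).hgt (dec h T.obj₃).hle (dec h T.obj₃).ι
  obtain ⟨e', he', -⟩ := lift_eu h O₂.mem (dec h T.obj₂).hgt (dec h T.obj₃).hle t
  simp only [Triangle.mk_obj₁, Triangle.mk_obj₂, Triangle.mk_obj₃, Triangle.mk_mor₁,
    Triangle.mk_mor₂, Triangle.mk_mor₃] at ht he' ⊢
  have hee' : e' ≫ e = 𝟙 ((Fle h).obj T.obj₃) := by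
    apply le_cancel h (dec h T.obj₃).hle
    erw [Category.assoc, he, ← Category.assoc, he', ht]
    exact (Category.id_comp _).symm
  have het : e ≫ t = O₂.m₁ := by
    have h1 : (e ≫ t) ≫ O₁.m₃ = O₂.m₁ ≫ O₁.m₃ := by erw [Category.assoc, ht]; exact he
    exact (ext_le h O₁.mem (dec h T.obj₁).hgt hCle (O₂.m₁ ≫ O₁.m₃)).unique h1 rfl
  have he'e : e ≫ e' = 𝟙 C := by
    have h1 : (e ≫ e') ≫ O₂.m₁ = O₂.m₁ := by
      erw [Category.assoc, he', het]
    exact (lift_eu h O₂.mem (dec h T.obj₂).hgt hCle O₂.m₁).unique h1 (Category.id_comp _)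
  refine ⟨e' ≫ wC, isomorphic_distinguished _ hC _
    (Triangle.isoMk _ _ (Iso.refl _) (Iso.refl _) ⟨e', e, hee', he'e⟩ ?_ ?_ ?_)⟩
  · dsimp; erw [Category.comp_id, Category.id_comp]; rfl
  · dsimp; erw [Category.id_comp, ← hvC, Category.assoc, he'e, Category.comp_id]; rfl
  · dsimp; simp; erw [CategoryTheory.Functor.map_id]; exact Category.comp_id _

lemma gt_des (T : Triangle D) (hT : T ∈ distTriang D) :
    ∃ d : (Fgt h).obj T.obj₃ ⟶ (((Fgt h).obj T.obj₁)⟦(1 : ℤ)⟧ : D),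
      Triangle.mk ((Fgt h).map T.mor₁) ((Fgt h).map T.mor₂) d ∈ distTriang D := by
  obtain ⟨C, vC, wC, hC⟩ := distinguished_cocone_triangle ((Fgt h).map T.mor₁)
  have hCgt : C ∈ Dgt := gt_cone h hC (dec h T.obj₁).hgt (dec h T.obj₂).hgt
  obtain ⟨W, qW, rW, hW⟩ := distinguished_cocone_triangle (T.mor₁ ≫ (dec h T.obj₂).π)
  have hrot₂ : Triangle.mk (dec h T.obj₂).π (dec h T.obj₂).δ (-((dec h T.obj₂).ι⟦(1 : ℤ)⟧'))
      ∈ distTriang D := rot_of_distTriang _ (dec h T.obj₂).mem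
  have hrot₁ : Triangle.mk (dec h T.obj₁).π (dec h T.obj₁).δ (-((dec h T.obj₁).ι⟦(1 : ℤ)⟧'))
      ∈ distTriang D := rot_of_distTriang _ (dec h T.obj₁).mem
  have O₁ := Triangulated.someOctahedron rfl hT hrot₂ hW
  have O₂ := Triangulated.someOctahedron (π_Fgt_map h T.mor₁) hrot₁ hC hW
  have hLx1 : ((dec h T.obj₁).le⟦(1 : ℤ)⟧ : D) ∈ Dle := h.le_shift _ (dec h T.obj₁).hle
  have hLy1 : ((dec h T.obj₂).le⟦(1 : ℤ)⟧ : D) ∈ Dle := h.le_shift _ (dec h T.obj₂).hle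
  obtain ⟨e, he, -⟩ := colift_eu h (dec h T.obj₃).mem (dec h T.obj₃).hle hCgt (O₁.m₁ ≫ O₂.m₃)
  simp only [Triangle.mk_obj₁, Triangle.mk_obj₂, Triangle.mk_obj₃, Triangle.mk_mor₁,
    Triangle.mk_mor₂, Triangle.mk_mor₃] at he
  have hvC : (Fgt h).map T.mor₂ ≫ e = vC := by
    apply gt_cancel h hCgt
    erw [← Category.assoc, π_Fgt_map, Category.assoc, he, ← Category.assoc, O₁.comm₁,
      Category.assoc, O₂.comm₃]
  obtain ⟨t, ht, -⟩ := ext_gt h O₁.mem hLy1 (dec h T.obj₃).hgt (dec h T.obj₃).π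
  obtain ⟨e', he', -⟩ := colift_eu h O₂.mem hLx1 (dec h T.obj₃).hgt t
  simp only [Triangle.mk_obj₁, Triangle.mk_obj₂, Triangle.mk_obj₃, Triangle.mk_mor₁,
    Triangle.mk_mor₂, Triangle.mk_mor₃] at ht he' ⊢
  have hee' : e ≫ e' = 𝟙 ((Fgt h).obj T.obj₃) := by
    apply gt_cancel h (dec h T.obj₃).hgt
    erw [← Category.assoc, he, Category.assoc, he', ht]
    exact (Category.comp_id _).symm
  have het : t ≫ e = O₂.m₃ := by
    have h1 : O₁.m₁ ≫ (t ≫ e) = O₁.m₁ ≫ O₂.m₃ := by erw [← Category.assoc, ht]; exact he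
    exact (ext_gt h O₁.mem hLy1 hCgt (O₁.m₁ ≫ O₂.m₃)).unique h1 rfl
  have he'e : e' ≫ e = 𝟙 C := by
    have h1 : O₂.m₃ ≫ (e' ≫ e) = O₂.m₃ := by
      erw [← Category.assoc, he', het]
    exact (colift_eu h O₂.mem hLx1 hCgt O₂.m₃).unique h1 (Category.comp_id _)
  refine ⟨e ≫ wC, isomorphic_distinguished _ hC _
    (Triangle.isoMk _ _ (Iso.refl _) (Iso.refl _) ⟨e, e', hee', he'e⟩ ?_ ?_ ?_)⟩
  · dsimp; erw [Category.comp_id, Category.id_comp]; rfl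
  · dsimp; erw [Category.id_comp, hvC]; rfl
  · dsimp; simp; erw [CategoryTheory.Functor.map_id]; exact Category.comp_id _

end MSAux


theorem stmt9 [IsTriangulated D] (Dle Dgt : Set D) (h : IsMStructure D Dle Dgt) :
    -- the truncations `a ↦ a≤` and `a ↦ a>` are (triangulated) functors `Fle`, `Fgt`,
    -- with natural decomposition triangles `Fle a → a → Fgt a → (Fle a)[1]`
    ∃ (Fle Fgt : D ⥤ D) (ι : Fle ⟶ 𝟭 D) (π : 𝟭 D ⟶ Fgt)
      (δ : ∀ a : D, Fgt.obj a ⟶ ((Fle.obj a)⟦(1 : ℤ)⟧ : D)),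
      (∀ a : D, Fle.obj a ∈ Dle) ∧
      (∀ a : D, Fgt.obj a ∈ Dgt) ∧
      (∀ a : D, Triangle.mk (ι.app a) (π.app a) (δ a) ∈ distTriang D) ∧
      -- naturality of the connecting morphism of the decomposition triangles
      (∀ (a b : D) (f : a ⟶ b), Fgt.map f ≫ δ b = δ a ≫ ((Fle.map f)⟦(1 : ℤ)⟧')) ∧
      -- the truncation functors commute with the shift up to natural isomorphism
      Nonempty (shiftFunctor D (1 : ℤ) ⋙ Fle ≅ Fle ⋙ shiftFunctor D (1 : ℤ)) ∧
      Nonempty (shiftFunctor D (1 : ℤ) ⋙ Fgt ≅ Fgt ⋙ shiftFunctor D (1 : ℤ)) ∧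
      -- they send distinguished triangles to distinguished triangles
      (∀ T : Triangle D, (T ∈ distTriang D) →
        ∃ d : Fle.obj T.obj₃ ⟶ ((Fle.obj T.obj₁)⟦(1 : ℤ)⟧ : D),
          Triangle.mk (Fle.map T.mor₁) (Fle.map T.mor₂) d ∈ distTriang D) ∧
      (∀ T : Triangle D, (T ∈ distTriang D) →
        ∃ d : Fgt.obj T.obj₃ ⟶ ((Fgt.obj T.obj₁)⟦(1 : ℤ)⟧ : D),
          Triangle.mk (Fgt.map T.mor₁) (Fgt.map T.mor₂) d ∈ distTriang D) := by
  refine ⟨MSAux.Fle h, MSAux.Fgt h,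
    { app := fun a => (MSAux.dec h a).ι
      naturality := fun a b f => by exact MSAux.Fle_map_ι h f },
    { app := fun a => (MSAux.dec h a).π
      naturality := fun a b f => by exact (MSAux.π_Fgt_map h f).symm },
    fun a => (MSAux.dec h a).δ,
    fun a => (MSAux.dec h a).hle,
    fun a => (MSAux.dec h a).hgt,
    fun a => (MSAux.dec h a).mem,
    fun a b f => MSAux.Fgt_map_δ h f,
    MSAux.leShift h,
    MSAux.gtShift h,
    fun T hT => MSAux.le_des h T hT,
    fun T hT => MSAux.gt_des h T hT⟩
end
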